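/- Let M be a p×q pattern matrix and N a q×s pattern matrix. If each row of N has exactly one entry equal to * and all other entries equal to 0, then P(M)P(N) = P(MN), where P(M)P(N) denotes the set of products {AB : A ∈ P(M), B ∈ P(N)} and MN is the pattern matrix product. -/

import Mathlib

inductive PSym | zero | star | any
deriving DecidableEq

namespace PSym

def symAdd : PSym → PSym → PSym
  | zero, x => x
  | x, zero => x
  | _, _ => any

def symMul : PSym → PSym → PSym
  | zero, _ => zero
  | _, zero => zero
  | star, star => star
  | _, _ => any

instance : Zero PSym := ⟨zero⟩
instance : Add PSym := ⟨symAdd⟩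

instance : AddCommMonoid PSym where
  add_assoc a b c := by cases a <;> cases b <;> cases c <;> rfl
  zero_add a := by cases a <;> rfl
  add_zero a := by cases a <;> rfl
  add_comm a b := by cases a <;> cases b <;> rfl
  nsmul := nsmulRec

end PSym

/-- The pattern class of a pattern matrix. -/
def PatClass {p q : Type*} (M : Matrix p q PSym) : Set (Matrix p q ℝ) :=
  {A | ∀ i j, (M i j = PSym.zero → A i j = 0) ∧ (M i j = PSym.star → A i j ≠ 0)}

/-- Product of pattern matrices. -/
def patMul {p q s : ℕ} (M : Matrix (Fin p) (Fin q) PSym) (N : Matrix (Fin q) (Fin s) PSym) :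
    Matrix (Fin p) (Fin s) PSym :=
  fun i j => ∑ k, PSym.symMul (M i k) (N k j)

/-- A 1×q pattern vector `M` is independent of an r×q pattern matrix `N`. -/
def Independent {q r : ℕ} (M : Matrix (Fin 1) (Fin q) PSym) (N : Matrix (Fin r) (Fin q) PSym) : Prop :=
  ∀ M₀ ∈ PatClass M, ∀ N₀ ∈ PatClass N, ∀ (z₁ : ℝ) (z₂ : Fin r → ℝ),
    (∀ j, z₁ * M₀ 0 j + ∑ i, z₂ i * N₀ i j = 0) → z₁ = 0

namespace PSymAux

open PSym

def val : PSym → ℕ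
  | PSym.zero => 0
  | PSym.star => 1
  | PSym.any => 2

lemma val_add (a b : PSym) : val (a + b) = min (val a + val b) 2 := by
  cases a <;> cases b <;> rfl

lemma val_zero : val (0 : PSym) = 0 := rfl

lemma val_eq_zero {a : PSym} : val a = 0 ↔ a = PSym.zero := by cases a <;> simp [val]
lemma val_eq_one {a : PSym} : val a = 1 ↔ a = PSym.star := by cases a <;> simp [val]

lemma val_sum {ι : Type*} (T : Finset ι) (g : ι → PSym) :
    val (∑ k ∈ T, g k) = min (∑ k ∈ T, val (g k)) 2 := by
  classical
  induction T using Finset.induction with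
  | empty => simp [val_zero]
  | @insert _ _ h ih =>
    rw [Finset.sum_insert h, Finset.sum_insert h, val_add, ih]
    omega

lemma symMul_star (a : PSym) : PSym.symMul a PSym.star = a := by cases a <;> rfl
lemma symMul_zero (a : PSym) : PSym.symMul a PSym.zero = PSym.zero := by cases a <;> rfl

lemma nat_sum_eq_one {ι : Type*} [DecidableEq ι] {T : Finset ι} {n : ι → ℕ}
    (h : ∑ k ∈ T, n k = 1) :
    ∃ k0 ∈ T, n k0 = 1 ∧ ∀ k ∈ T, k ≠ k0 → n k = 0 := by
  have : ∃ k0 ∈ T, n k0 ≠ 0 := by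
    by_contra hc
    push_neg at hc
    rw [Finset.sum_eq_zero hc] at h; omega
  obtain ⟨k0, hk0T, hk0⟩ := this
  have hsplit := Finset.add_sum_erase T n hk0T
  refine ⟨k0, hk0T, by omega, fun k hk hne => ?_⟩
  have hkE : k ∈ T.erase k0 := Finset.mem_erase.2 ⟨hne, hk⟩
  have := Finset.single_le_sum (f := n) (fun i _ => Nat.zero_le _) hkE
  omega

lemma exists_vec {ι : Type*} [DecidableEq ι] (T : Finset ι) (m : ι → PSym) (x : ℝ)
    (h0 : (∑ k ∈ T, m k) = PSym.zero → x = 0)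
    (h1 : (∑ k ∈ T, m k) = PSym.star → x ≠ 0) :
    ∃ a : ι → ℝ, (∀ k ∈ T, (m k = PSym.zero → a k = 0) ∧ (m k = PSym.star → a k ≠ 0)) ∧
      ∑ k ∈ T, a k = x := by
  have hval := val_sum T m
  rcases Nat.lt_or_ge (∑ k ∈ T, val (m k)) 2 with hn | hn
  · interval_cases h : (∑ k ∈ T, val (m k))
    · -- sum = 0 : all zero
      have hall : ∀ k ∈ T, m k = PSym.zero := by
        intro k hk
        apply val_eq_zero.1
        have h2 : val (m k) ≤ ∑ j ∈ T, val (m j) :=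
          Finset.single_le_sum (f := fun j => val (m j)) (fun i _ => Nat.zero_le _) hk
        omega
      have hx : x = 0 := by
        apply h0
        apply val_eq_zero.1
        rw [hval]; omega
      refine ⟨fun _ => 0, fun k hk => ⟨fun _ => rfl, fun hs => ?_⟩, by simp [hx]⟩
      rw [hall k hk] at hs; exact absurd hs (by simp)
    · -- sum = 1 : exactly one star
      obtain ⟨k0, hk0T, hk1, hrest⟩ := nat_sum_eq_one h
      have hxne : x ≠ 0 := by
        apply h1
        apply val_eq_one.1
        rw [hval]; omega
      refine ⟨fun k => if k = k0 then x else 0, fun k hk => ?_, ?_⟩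
      · by_cases hkk : k = k0
        · subst hkk
          have : m k = PSym.star := val_eq_one.1 hk1
          simp [this, hxne]
        · have : m k = PSym.zero := val_eq_zero.1 (hrest k hk hkk)
          simp [this, hkk]
      · rw [Finset.sum_ite_eq' T k0 (fun _ => x)]
        simp [hk0T]
  · -- sum ≥ 2
    set S : Finset ι := T.filter (fun k => m k = PSym.star) with hS
    set Y : Finset ι := T.filter (fun k => m k = PSym.any) with hY
    have hScard : ∀ k, k ∈ S ↔ k ∈ T ∧ m k = PSym.star := fun k => Finset.mem_filter
    by_cases hYne : Y.Nonempty
    · obtain ⟨y0, hy0⟩ := hYne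
      have hy0T : y0 ∈ T := (Finset.mem_filter.1 hy0).1
      have hy0a : m y0 = PSym.any := (Finset.mem_filter.1 hy0).2
      refine ⟨fun k => (if k ∈ S then 1 else 0) + (if k = y0 then x - S.card else 0),
        fun k hk => ⟨?_, ?_⟩, ?_⟩
      · intro hz
        have h1 : k ∉ S := fun hkS => by simp [(hScard k).1 hkS, hz] at *
        have h2 : k ≠ y0 := fun he => by rw [he, hy0a] at hz; exact absurd hz (by simp)
        simp [h1, h2]
      · intro hs
        have h1 : k ∈ S := (hScard k).2 ⟨hk, hs⟩
        have h2 : k ≠ y0 := fun he => by rw [he, hy0a] at hs; exact absurd hs (by simp)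
        simp [h1, h2]
      · rw [Finset.sum_add_distrib, Finset.sum_ite_eq' T y0 (fun _ => x - (S.card : ℝ))]
        rw [Finset.sum_ite_mem, Finset.inter_eq_right.2 (Finset.filter_subset _ _)]
        simp [hy0T, ← hS]
    · -- Y empty, so S.card ≥ 2
      have hYall : ∀ k ∈ T, m k ≠ PSym.any := by
        intro k hk hka
        exact hYne ⟨k, Finset.mem_filter.2 ⟨hk, hka⟩⟩
      have hcard2 : 2 ≤ S.card := by
        have : ∑ k ∈ T, val (m k) = ∑ k ∈ T, (if m k = PSym.star then 1 else 0) := by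
          apply Finset.sum_congr rfl
          intro k hk
          cases h : m k
          · simp [val]
          · simp [val]
          · exact absurd h (hYall k hk)
        rw [this, ← Finset.card_filter] at hn
        exact hn
      obtain ⟨k0, hk0S⟩ : S.Nonempty := Finset.card_pos.1 (by omega)
      have hk0T : k0 ∈ T := (Finset.mem_filter.1 hk0S).1
      have hk0s : m k0 = PSym.star := (Finset.mem_filter.1 hk0S).2
      set c : ℝ := if ((S.card : ℝ) - 1) = x then 2 else 1 with hc
      have hcne : c ≠ 0 := by
        rw [hc]; split <;> norm_num
      have hkey : x - ((S.card : ℝ) - 1) * c ≠ 0 := by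
        rw [hc]; split
        · rename_i he
          rw [← he]
          have : (1 : ℝ) ≤ (S.card : ℝ) - 1 := by
            have : (2 : ℝ) ≤ S.card := by exact_mod_cast hcard2
            linarith
          intro hcon; nlinarith
        · rename_i he
          intro hcon
          apply he
          linarith [hcon]
      refine ⟨fun k => (if k ∈ S.erase k0 then c else 0) +
          (if k = k0 then x - ((S.card : ℝ) - 1) * c else 0),
        fun k hk => ⟨?_, ?_⟩, ?_⟩
      · intro hz
        have h1 : k ∉ S.erase k0 := fun hkS =>
          by simp [(hScard k).1 (Finset.mem_of_mem_erase hkS), hz] at *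
        have h2 : k ≠ k0 := fun he => by rw [he, hk0s] at hz; exact absurd hz (by simp)
        simp [h1, h2]
      · intro hs
        by_cases hkk : k = k0
        · simp [hkk, Finset.notMem_erase, hkey]
        · have h1 : k ∈ S.erase k0 := Finset.mem_erase.2 ⟨hkk, (hScard k).2 ⟨hk, hs⟩⟩
          simp [h1, hkk, hcne]
      · rw [Finset.sum_add_distrib, Finset.sum_ite_eq' T k0
            (fun _ => x - ((S.card : ℝ) - 1) * c)]
        rw [Finset.sum_ite_mem]
        have hsub : T ∩ S.erase k0 = S.erase k0 := Finset.inter_eq_right.2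
          ((Finset.erase_subset _ _).trans (Finset.filter_subset _ _))
        rw [hsub, Finset.sum_const, Finset.card_erase_of_mem hk0S]
        have : ((S.card - 1 : ℕ) : ℝ) = (S.card : ℝ) - 1 := by
          have : 1 ≤ S.card := by omega
          push_cast [Nat.cast_sub this]; ring
        simp [hk0T, this]

end PSymAux

/-- If each row of `N` has exactly one `*` entry and all other
entries `0`, then `P(M)P(N) = P(MN)`. -/
theorem pattern_class_mul_of_rows {p q s : ℕ}
    (M : Matrix (Fin p) (Fin q) PSym) (N : Matrix (Fin q) (Fin s) PSym)
    (hN : ∀ k : Fin q, (∃! j : Fin s, N k j = PSym.star) ∧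
      ∀ j : Fin s, N k j ≠ PSym.star → N k j = PSym.zero) :
    {X : Matrix (Fin p) (Fin s) ℝ | ∃ A ∈ PatClass M, ∃ B ∈ PatClass N, X = A * B} =
      PatClass (patMul M N) := by
  classical
  open PSymAux in
  -- extract the function f picking the star column of each row of N
  obtain ⟨f, hf⟩ : ∃ f : Fin q → Fin s, ∀ k, N k (f k) = PSym.star ∧
      ∀ j, N k j = PSym.star → j = f k := by
    choose f h1 h2 using fun k => (hN k).1
    exact ⟨f, fun k => ⟨h1 k, h2 k⟩⟩
  have hNz : ∀ k j, j ≠ f k → N k j = PSym.zero := by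
    intro k j hj
    apply (hN k).2
    intro hs
    exact hj ((hf k).2 j hs)
  -- patMul as a sum over the fiber of f
  have hσ : ∀ i j, patMul M N i j = ∑ k ∈ Finset.univ.filter (fun k => f k = j), M i k := by
    intro i j
    rw [patMul, Finset.sum_filter]
    apply Finset.sum_congr rfl
    intro k _
    by_cases hk : f k = j
    · rw [if_pos hk, ← hk, (hf k).1, PSymAux.symMul_star]
    · rw [if_neg hk, hNz k j (fun he => hk he.symm), PSymAux.symMul_zero]
      rfl
  ext X
  simp only [Set.mem_setOf_eq]
  constructor
  · rintro ⟨A, hA, B, hB, rfl⟩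
    intro i j
    set T := Finset.univ.filter (fun k => f k = j) with hT
    have hval : PSymAux.val (patMul M N i j) = min (∑ k ∈ T, PSymAux.val (M i k)) 2 := by
      rw [hσ i j, PSymAux.val_sum]
    have hAB : (A * B) i j = ∑ k ∈ T, A i k * B k j := by
      rw [Matrix.mul_apply, ← Finset.sum_filter_add_sum_filter_not Finset.univ
        (fun k => f k = j)]
      have : ∑ k ∈ Finset.univ.filter (fun k => ¬ f k = j), A i k * B k j = 0 := by
        apply Finset.sum_eq_zero
        intro k hk
        have : B k j = 0 := (hB k j).1 (hNz k j fun he => (Finset.mem_filter.1 hk).2 he.symm)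
        rw [this, mul_zero]
      rw [this, add_zero]
    constructor
    · intro hz
      have : ∑ k ∈ T, PSymAux.val (M i k) = 0 := by
        have hv0 : PSymAux.val PSym.zero = 0 := rfl
        rw [hz, hv0] at hval
        omega
      rw [hAB]
      apply Finset.sum_eq_zero
      intro k hk
      have hk0 : PSymAux.val (M i k) = 0 := by
        have h2 : PSymAux.val (M i k) ≤ ∑ j ∈ T, PSymAux.val (M i j) :=
          Finset.single_le_sum (f := fun j => PSymAux.val (M i j)) (fun _ _ => Nat.zero_le _) hk
        omega
      rw [(hA i k).1 (PSymAux.val_eq_zero.1 hk0), zero_mul]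
    · intro hs
      have h1 : ∑ k ∈ T, PSymAux.val (M i k) = 1 := by
        have hv1 : PSymAux.val PSym.star = 1 := rfl
        rw [hs, hv1] at hval
        omega
      obtain ⟨k0, hk0T, hk1, hrest⟩ := PSymAux.nat_sum_eq_one h1
      rw [hAB, Finset.sum_eq_single_of_mem k0 hk0T]
      · apply mul_ne_zero
        · exact (hA i k0).2 (PSymAux.val_eq_one.1 hk1)
        · have hk0j : f k0 = j := (Finset.mem_filter.1 hk0T).2
          exact (hB k0 j).2 (hk0j ▸ (hf k0).1)
      · intro k hk hne
        rw [(hA i k).1 (PSymAux.val_eq_zero.1 (hrest k hk hne)), zero_mul]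
  · intro hX
    -- choose the entries of A column-fiber by column-fiber
    have hex : ∀ (i : Fin p) (j : Fin s), ∃ a : Fin q → ℝ,
        (∀ k ∈ Finset.univ.filter (fun k => f k = j),
          (M i k = PSym.zero → a k = 0) ∧ (M i k = PSym.star → a k ≠ 0)) ∧
        ∑ k ∈ Finset.univ.filter (fun k => f k = j), a k = X i j := by
      intro i j
      apply PSymAux.exists_vec
      · intro h; exact (hX i j).1 (by rw [hσ i j]; exact h)
      · intro h; exact (hX i j).2 (by rw [hσ i j]; exact h)
    choose a ha hsum using hex
    refine ⟨fun i k => a i (f k) k, ?_, fun k j => if f k = j then 1 else 0, ?_, ?_⟩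
    · intro i k
      exact ha i (f k) k (Finset.mem_filter.2 ⟨Finset.mem_univ _, rfl⟩)
    · intro k j
      constructor
      · intro hz
        have : f k ≠ j := fun he => by rw [← he, (hf k).1] at hz; exact absurd hz (by simp)
        simp [this]
      · intro hs
        have : f k = j := ((hf k).2 j hs).symm
        simp [this]
    · ext i j
      change X i j = ∑ k, a i (f k) k * (if f k = j then (1:ℝ) else 0)
      have : ∀ k : Fin q, a i (f k) k * (if f k = j then (1:ℝ) else 0) =
          if f k = j then a i j k else 0 := by
        intro k
        by_cases hk : f k = j
        · subst hk; simp
        · simp [hk]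
      simp_rw [this]
      rw [← Finset.sum_filter, hsum i j]
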